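/- Let σ:ℝ³→[0,∞) be continuous, spherically symmetric, with compact support, finite mass, satisfying the polytropic Euler–Lagrange relation A'(σ(x)) = [V_σ(x)+λ]₊ on all of ℝ³ with λ < 0, where A(s) = (K/(γ−1))s^γ, γ > 4/3. Then the energy E₀(σ) = ∫A(σ) − (1/2)G(σ,σ) satisfies E₀(σ) = (4−3γ)∫A(σ), and G(σ,σ) = (6γ−6)∫A(σ). -/

import Mathlib

open MeasureTheory Set Filter Topology Metric Real

theorem vol_ball3 : (volume (ball (0:EuclideanSpace ℝ (Fin 3)) 1)).toReal = 4 * π / 3 := by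
  rw [EuclideanSpace.volume_ball]
  have h1 : Real.Gamma ((Fintype.card (Fin 3)) / 2 + 1) = 3 * Real.sqrt π / 4 := by
    rw [Fintype.card_fin]
    rw [show ((3:ℕ):ℝ)/2 + 1 = (3/2) + 1 by norm_num, Real.Gamma_add_one (by norm_num),
      show (3:ℝ)/2 = 1/2 + 1 by norm_num, Real.Gamma_add_one (by norm_num), Real.Gamma_one_half_eq]
    ring
  rw [h1, Fintype.card_fin]
  have hπ := Real.pi_pos
  have hs : Real.sqrt π > 0 := Real.sqrt_pos.2 hπ
  rw [ENNReal.ofReal_one, one_pow, one_mul, ENNReal.toReal_ofReal (by positivity)]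
  rw [show Real.sqrt π ^ 3 = π * Real.sqrt π by rw [pow_succ, sq_sqrt hπ.le]]
  field_simp

theorem radial3 (g : ℝ → ℝ) : ∫ x : EuclideanSpace ℝ (Fin 3), g ‖x‖ =
    (4 * π) * ∫ r in Ioi (0:ℝ), r ^ 2 * g r := by
  rw [MeasureTheory.integral_fun_norm_addHaar volume g]
  rw [show Module.finrank ℝ (EuclideanSpace ℝ (Fin 3)) = 3 from finrank_euclideanSpace_fin]
  rw [measureReal_def, vol_ball3, nsmul_eq_mul, smul_eq_mul, ← integral_const_mul]
  rw [show (4*π : ℝ) * ∫ r in Ioi (0:ℝ), r ^ 2 * g r 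
    = ∫ r in Ioi (0:ℝ), (4*π) * (r ^ 2 * g r) from (integral_const_mul _ _).symm]
  norm_num
  rw [← integral_const_mul]
  apply integral_congr_ae; filter_upwards with r
  ring


theorem LY_lintegral_polar (g : ℝ × ℝ → ENNReal) :
    (∫⁻ p in polarCoord.target, ENNReal.ofReal p.1 * g (polarCoord.symm p)) = ∫⁻ p, g p := by
  set B : ℝ × ℝ → ℝ × ℝ →L[ℝ] ℝ × ℝ := fun p =>
    LinearMap.toContinuousLinearMap (Matrix.toLin (Module.Basis.finTwoProd ℝ) (Module.Basis.finTwoProd ℝ)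
      !![Real.cos p.2, -p.1 * Real.sin p.2; Real.sin p.2, p.1 * Real.cos p.2])
  have A : ∀ p ∈ polarCoord.target, HasFDerivWithinAt polarCoord.symm (B p) polarCoord.target p :=
    fun p _ => (hasFDerivAt_polarCoord_symm p).hasFDerivWithinAt
  have B_det : ∀ p, (B p).det = p.1 := by
    intro p
    conv_rhs => rw [← one_mul p.1, ← Real.cos_sq_add_sin_sq p.2]
    simp only [B, neg_mul, LinearMap.det_toContinuousLinearMap, LinearMap.det_toLin,
      Matrix.det_fin_two_of, sub_neg_eq_add]
    ring
  symm
  calc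
    ∫⁻ p, g p = ∫⁻ p in polarCoord.source, g p := by
      rw [← setLIntegral_univ]
      exact setLIntegral_congr polarCoord_source_ae_eq_univ.symm
    _ = ∫⁻ p in polarCoord.symm '' polarCoord.target, g p := by
      rw [polarCoord.symm_image_target_eq_source]
    _ = ∫⁻ p in polarCoord.target, ENNReal.ofReal |(B p).det| * g (polarCoord.symm p) := by
      apply lintegral_image_eq_lintegral_abs_det_fderiv_mul volume
        polarCoord.open_target.measurableSet A
        (polarCoord.symm.injOn.mono (by rw [polarCoord.symm_source]))
    _ = ∫⁻ p in polarCoord.target, ENNReal.ofReal p.1 * g (polarCoord.symm p) := by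
      apply setLIntegral_congr_fun polarCoord.open_target.measurableSet
      intro p hp
      dsimp only
      rw [B_det, abs_of_pos hp.1]

theorem LY_norm3 (w : EuclideanSpace ℝ (Fin 3)) :
    ‖w‖ = Real.sqrt (w 0 ^ 2 + (w 1 ^ 2 + w 2 ^ 2)) := by
  rw [EuclideanSpace.norm_eq]
  congr 1
  rw [Fin.sum_univ_three]
  simp [sq_abs]
  ring

theorem LY_min_aux {r s : ℝ} (hr : 0 < r) (hs : 0 < s) :
    r + s - |r - s| = 2 * min r s := by
  rcases le_total r s with h | h
  · rw [abs_of_nonpos (by linarith), min_eq_left h]; ring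
  · rw [abs_of_nonneg (by linarith), min_eq_right h]; ring

set_option maxHeartbeats 1000000 in
theorem newton3 (f : ℝ → ℝ) (hf : Continuous f) (hnn : ∀ r, 0 ≤ f r)
    (hcs : HasCompactSupport f)
    (σ : EuclideanSpace ℝ (Fin 3) → ℝ) (hσf : ∀ y, σ y = f ‖y‖)
    (x : EuclideanSpace ℝ (Fin 3)) (hx : x ≠ 0) :
    ∫ y, σ y / ‖x - y‖
      = (4 * π / ‖x‖) * ∫ s in Ioi (0:ℝ), s * f s * min ‖x‖ s := by
  have hσcont : Continuous σ := by
    rw [show σ = fun y => f ‖y‖ from funext hσf]; exact hf.comp continuous_norm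
  set r := ‖x‖ with hrdef
  have hr : 0 < r := norm_pos_iff.2 hx
  -- the 2D profile
  set H : ℝ → ℝ → ENNReal := fun t q =>
    ENNReal.ofReal (f (Real.sqrt (t ^ 2 + q)) / Real.sqrt ((r - t) ^ 2 + q)) with hHdef
  have hHm : Measurable (fun p : ℝ × ℝ => H p.1 p.2) := by
    apply ENNReal.measurable_ofReal.comp
    apply Measurable.div
    · exact (hf.comp (((continuous_fst.pow 2).add continuous_snd).sqrt)).measurable
    · exact (((continuous_const.sub continuous_fst).pow 2).add continuous_snd).sqrt.measurable
  clear_value H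
  have hmeas0 : Measurable (fun y : EuclideanSpace ℝ (Fin 3) => σ y / ‖x - y‖) := by
    apply Measurable.div hσcont.measurable
    exact (continuous_const.sub continuous_id).norm.measurable
  -- orthonormal basis adapted to x
  obtain ⟨b, hb0⟩ : ∃ b : OrthonormalBasis (Fin 3) ℝ (EuclideanSpace ℝ (Fin 3)),
      b 0 = r⁻¹ • x := by
    have hcard : Module.finrank ℝ (EuclideanSpace ℝ (Fin 3)) = Fintype.card (Fin 3) := by
      simp [finrank_euclideanSpace]
    have hu : ‖r⁻¹ • x‖ = 1 := by
      rw [norm_smul, norm_inv, norm_norm]; field_simp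
    have ho : Orthonormal ℝ (Set.restrict {(0 : Fin 3)} (fun _ => r⁻¹ • x)) := by
      constructor
      · intro i
        exact hu
      · intro i j hij
        exfalso
        apply hij
        have hi := i.2; have hj := j.2
        simp only [mem_singleton_iff] at hi hj
        exact Subtype.ext (hi.trans hj.symm)
    obtain ⟨b, hb⟩ := ho.exists_orthonormalBasis_extension_of_card_eq hcard
    exact ⟨b, hb 0 rfl⟩
  set T := b.repr with hTdef
  have hTx : T x = r • EuclideanSpace.single (0 : Fin 3) (1 : ℝ) := by
    have h1 : x = r • (r⁻¹ • x) := (smul_inv_smul₀ hr.ne' x).symm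
    calc T x = T (r • (r⁻¹ • x)) := by rw [← h1]
    _ = r • T (b 0) := by rw [hb0, T.map_smul]
    _ = r • EuclideanSpace.single (0 : Fin 3) (1 : ℝ) := by rw [b.repr_self 0]
  -- composite measure preserving map
  set Φ : ℝ × (ℝ × ℝ) → EuclideanSpace ℝ (Fin 3) := fun p =>
    T.symm ((MeasurableEquiv.toLp 2 (Fin 3 → ℝ))
      ((MeasurableEquiv.piFinSuccAbove (fun _ : Fin 3 => ℝ) 0).symm
        (p.1, MeasurableEquiv.finTwoArrow.symm p.2))) with hΦdef
  have hΦmp : MeasurePreserving Φ volume volume := by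
    have h1 := b.measurePreserving_repr_symm
    have h2 := (EuclideanSpace.volume_preserving_symm_measurableEquiv_toLp (Fin 3)).symm
    have h3 := (volume_preserving_piFinSuccAbove (fun _ : Fin 3 => ℝ) 0).symm
    have h4 := (MeasurePreserving.id (volume : Measure ℝ)).prod
      ((volume_preserving_finTwoArrow ℝ).symm)
    exact h1.comp ((h2.comp (h3.comp h4)) : _)
  have hΦval : ∀ p : ℝ × (ℝ × ℝ),
      ENNReal.ofReal (σ (Φ p) / ‖x - Φ p‖) = H p.1 (p.2.1 ^ 2 + p.2.2 ^ 2) := by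
    rintro ⟨t, a, c⟩
    have hz : ((MeasurableEquiv.toLp 2 (Fin 3 → ℝ))
        ((MeasurableEquiv.piFinSuccAbove (fun _ : Fin 3 => ℝ) 0).symm
          (t, MeasurableEquiv.finTwoArrow.symm (a, c))) : EuclideanSpace ℝ (Fin 3))
        = WithLp.toLp 2 (![t, a, c] : Fin 3 → ℝ) := by
      have h5 : (MeasurableEquiv.piFinSuccAbove (fun _ : Fin 3 => ℝ) 0).symm
          (t, MeasurableEquiv.finTwoArrow.symm (a, c))
          = Fin.cons t (Fin.cons a (Fin.cons c finZeroElim)) := by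
        simp [MeasurableEquiv.piFinSuccAbove, Fin.insertNthEquiv]
      rw [h5]
      ext i
      fin_cases i <;> rfl
    set z : EuclideanSpace ℝ (Fin 3) := WithLp.toLp 2 (![t, a, c] : Fin 3 → ℝ) with hzdef
    have hΦp : Φ (t, (a, c)) = T.symm z := by rw [hΦdef]; simp only; rw [hz]
    have hnormΦ : ‖Φ (t, (a, c))‖ = Real.sqrt (t ^ 2 + (a ^ 2 + c ^ 2)) := by
      rw [hΦp, T.symm.norm_map z, LY_norm3]
      norm_num [hzdef]
      rfl
    have hnormsub : ‖x - Φ (t, (a, c))‖ = Real.sqrt ((r - t) ^ 2 + (a ^ 2 + c ^ 2)) := by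
      have h6 : ‖x - Φ (t, (a, c))‖ = ‖T x - z‖ := by
        rw [hΦp, ← T.norm_map (x - T.symm z), T.map_sub, T.apply_symm_apply]
      rw [h6, hTx, LY_norm3]
      have e0 : (r • EuclideanSpace.single (0 : Fin 3) (1 : ℝ) - z) 0 = r - t := by
        simp [hzdef, EuclideanSpace.single_apply]
      have e1 : (r • EuclideanSpace.single (0 : Fin 3) (1 : ℝ) - z) 1 = -a := by
        simp [hzdef, EuclideanSpace.single_apply]
      have e2 : (r • EuclideanSpace.single (0 : Fin 3) (1 : ℝ) - z) 2 = -c := by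
        simp [hzdef, EuclideanSpace.single_apply]
      rw [e0, e1, e2]
      ring_nf
    simp only [hHdef, hσf]
    rw [hnormΦ, hnormsub]
  -- move to the lintegral world
  have step0 : ∫ y, σ y / ‖x - y‖
      = (∫⁻ y, ENNReal.ofReal (σ y / ‖x - y‖)).toReal := by
    rw [integral_eq_lintegral_of_nonneg_ae]
    · filter_upwards with y
      have := hnn ‖y‖
      rw [hσf y]
      positivity
    · exact hmeas0.aestronglyMeasurable
  have step1 : (∫⁻ y, ENNReal.ofReal (σ y / ‖x - y‖))
      = ∫⁻ p : ℝ × (ℝ × ℝ), H p.1 (p.2.1 ^ 2 + p.2.2 ^ 2) := by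
    have h := hΦmp.lintegral_comp (f := fun y => ENNReal.ofReal (σ y / ‖x - y‖))
      (ENNReal.measurable_ofReal.comp hmeas0)
    rw [← h]
    exact lintegral_congr fun p => hΦval p
  have hmeas2 : Measurable fun p : ℝ × (ℝ × ℝ) => H p.1 (p.2.1 ^ 2 + p.2.2 ^ 2) := by
    have hmap : Measurable (fun p : ℝ × (ℝ × ℝ) => ((p.1, p.2.1 ^ 2 + p.2.2 ^ 2) : ℝ × ℝ)) :=
      measurable_fst.prodMk
        (((measurable_fst.comp measurable_snd).pow_const 2).add
          ((measurable_snd.comp measurable_snd).pow_const 2))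
    exact hHm.comp hmap
  have step2 : ∫⁻ p : ℝ × (ℝ × ℝ), H p.1 (p.2.1 ^ 2 + p.2.2 ^ 2)
      = ∫⁻ t : ℝ, ∫⁻ v : ℝ × ℝ, H t (v.1 ^ 2 + v.2 ^ 2) := by
    rw [Measure.volume_eq_prod, lintegral_prod _ hmeas2.aemeasurable]
  have hmeasρ : ∀ t : ℝ, Measurable fun p : ℝ × ℝ => ENNReal.ofReal p.1 * H t (p.1 ^ 2) := by
    intro t
    apply Measurable.mul
    · exact ENNReal.measurable_ofReal.comp measurable_fst
    · have hmap : Measurable (fun p : ℝ × ℝ => ((t, p.1 ^ 2) : ℝ × ℝ)) :=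
        measurable_const.prodMk (measurable_fst.pow_const 2)
      exact hHm.comp hmap
  have step3 : ∀ t : ℝ, ∫⁻ v : ℝ × ℝ, H t (v.1 ^ 2 + v.2 ^ 2)
      = ENNReal.ofReal (2 * π) * ∫⁻ ρ in Ioi (0:ℝ), ENNReal.ofReal ρ * H t (ρ ^ 2) := by
    intro t
    rw [← LY_lintegral_polar (fun v => H t (v.1 ^ 2 + v.2 ^ 2))]
    have hcongr : ∀ᵐ p ∂(volume.restrict polarCoord.target),
        ENNReal.ofReal p.1 * H t ((polarCoord.symm p).1 ^ 2 + (polarCoord.symm p).2 ^ 2)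
        = ENNReal.ofReal p.1 * H t (p.1 ^ 2) := by
      filter_upwards with p
      rw [polarCoord_symm_apply]
      congr 2
      calc (p.1 * Real.cos p.2) ^ 2 + (p.1 * Real.sin p.2) ^ 2
          = p.1 ^ 2 * (Real.cos p.2 ^ 2 + Real.sin p.2 ^ 2) := by ring
        _ = p.1 ^ 2 := by rw [Real.cos_sq_add_sin_sq, mul_one]
    rw [lintegral_congr_ae hcongr, polarCoord_target, Measure.volume_eq_prod,
      ← Measure.prod_restrict, lintegral_prod _ (hmeasρ t).aemeasurable]
    simp only [setLIntegral_const, Real.volume_Ioo]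
    rw [show π - -π = 2 * π by ring]
    rw [← lintegral_const_mul' _ _ ENNReal.ofReal_ne_top]
    congr 1
    funext ρ
    ring
  -- recombine into a planar integral
  have hmeasΨ : Measurable fun p : ℝ × ℝ => ENNReal.ofReal p.2 * H p.1 (p.2 ^ 2) := by
    apply Measurable.mul
    · exact ENNReal.measurable_ofReal.comp measurable_snd
    · have hmap : Measurable (fun p : ℝ × ℝ => ((p.1, p.2 ^ 2) : ℝ × ℝ)) :=
        measurable_fst.prodMk (measurable_snd.pow_const 2)
      exact hHm.comp hmap
  have step4 : ∫⁻ t : ℝ, ∫⁻ ρ in Ioi (0:ℝ), ENNReal.ofReal ρ * H t (ρ ^ 2)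
      = ∫⁻ p in (univ : Set ℝ) ×ˢ Ioi (0:ℝ), ENNReal.ofReal p.2 * H p.1 (p.2 ^ 2) := by
    rw [Measure.volume_eq_prod, ← Measure.prod_restrict,
      lintegral_prod _ hmeasΨ.aemeasurable, Measure.restrict_univ]
  have hSm : MeasurableSet ((univ : Set ℝ) ×ˢ Ioi (0:ℝ)) :=
    MeasurableSet.univ.prod measurableSet_Ioi
  have step5 : ∫⁻ p in (univ : Set ℝ) ×ˢ Ioi (0:ℝ), ENNReal.ofReal p.2 * H p.1 (p.2 ^ 2)
      = ∫⁻ p in polarCoord.target, ENNReal.ofReal p.1 *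
          (((univ : Set ℝ) ×ˢ Ioi (0:ℝ)).indicator
            (fun q => ENNReal.ofReal q.2 * H q.1 (q.2 ^ 2)) (polarCoord.symm p)) := by
    rw [← lintegral_indicator hSm, ← LY_lintegral_polar]
  set G : ℝ → ℝ → ENNReal := fun s θ =>
    ENNReal.ofReal (s ^ 2 * Real.sin θ * f s /
      Real.sqrt (r ^ 2 + s ^ 2 - 2 * r * s * Real.cos θ)) with hGdef
  clear_value G
  have hptwise : ∀ p ∈ polarCoord.target, ENNReal.ofReal p.1 *
      (((univ : Set ℝ) ×ˢ Ioi (0:ℝ)).indicator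
        (fun q => ENNReal.ofReal q.2 * H q.1 (q.2 ^ 2)) (polarCoord.symm p))
      = (Ioo 0 π).indicator (G p.1) p.2 := by
    rintro ⟨s, θ⟩ hp
    rw [polarCoord_target] at hp
    obtain ⟨hs, hθ⟩ := hp
    have hs' : (0:ℝ) < s := hs
    have hθ' : θ ∈ Ioo (-π) π := hθ
    rw [polarCoord_symm_apply]
    by_cases hsin : 0 < Real.sin θ
    · have hθmem : θ ∈ Ioo (0:ℝ) π := by
        constructor
        · by_contra hle
          push_neg at hle
          have h9 : (0:ℝ) ≤ Real.sin (-θ) :=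
            Real.sin_nonneg_of_nonneg_of_le_pi (by linarith [hθ'.1]) (by linarith [hθ'.1])
          rw [Real.sin_neg] at h9
          linarith
        · exact hθ'.2
      have hmem : ((s * Real.cos θ, s * Real.sin θ) : ℝ × ℝ)
          ∈ (univ : Set ℝ) ×ˢ Ioi (0:ℝ) := ⟨trivial, mul_pos hs' hsin⟩
      rw [indicator_of_mem hmem, indicator_of_mem hθmem]
      have h1 : (s * Real.cos θ) ^ 2 + (s * Real.sin θ) ^ 2 = s ^ 2 := by
        linear_combination (s ^ 2) * (Real.sin_sq_add_cos_sq θ)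
      have h2 : (r - s * Real.cos θ) ^ 2 + (s * Real.sin θ) ^ 2
          = r ^ 2 + s ^ 2 - 2 * r * s * Real.cos θ := by
        linear_combination (s ^ 2) * (Real.sin_sq_add_cos_sq θ)
      rw [hHdef, hGdef]
      simp only
      rw [h1, h2, Real.sqrt_sq hs'.le]
      rw [← ENNReal.ofReal_mul (by positivity), ← ENNReal.ofReal_mul hs'.le]
      congr 1
      ring
    · push_neg at hsin
      have hnot1 : ((s * Real.cos θ, s * Real.sin θ) : ℝ × ℝ)
          ∉ (univ : Set ℝ) ×ˢ Ioi (0:ℝ) := by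
        intro hmem
        have h9 : (0:ℝ) < s * Real.sin θ := hmem.2
        nlinarith
      have hnot2 : θ ∉ Ioo (0:ℝ) π := by
        intro hθ2
        have := Real.sin_pos_of_pos_of_lt_pi hθ2.1 hθ2.2
        linarith
      rw [indicator_of_notMem hnot1, indicator_of_notMem hnot2, mul_zero]
  have hmeasGp : Measurable fun p : ℝ × ℝ => (Ioo (0:ℝ) π).indicator (G p.1) p.2 := by
    have h1 : (fun p : ℝ × ℝ => (Ioo (0:ℝ) π).indicator (G p.1) p.2)
        = ((univ : Set ℝ) ×ˢ Ioo (0:ℝ) π).indicator (fun p => G p.1 p.2) := by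
      funext p
      by_cases hp : p.2 ∈ Ioo (0:ℝ) π
      · rw [indicator_of_mem hp, indicator_of_mem (by exact ⟨trivial, hp⟩)]
      · rw [indicator_of_notMem hp, indicator_of_notMem (fun hmem => hp hmem.2)]
    rw [h1]
    apply Measurable.indicator _ (MeasurableSet.univ.prod measurableSet_Ioo)
    rw [hGdef]
    apply ENNReal.measurable_ofReal.comp
    apply Measurable.div
    · exact (((continuous_fst.pow 2).mul
        (Real.continuous_sin.comp continuous_snd)).mul (hf.comp continuous_fst)).measurable
    · exact ((continuous_const.add (continuous_fst.pow 2)).sub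
        (((continuous_const.mul continuous_fst)).mul
          (Real.continuous_cos.comp continuous_snd))).sqrt.measurable
  have step6 : ∫⁻ p in polarCoord.target, ENNReal.ofReal p.1 *
      (((univ : Set ℝ) ×ˢ Ioi (0:ℝ)).indicator
        (fun q => ENNReal.ofReal q.2 * H q.1 (q.2 ^ 2)) (polarCoord.symm p))
      = ∫⁻ s in Ioi (0:ℝ), ∫⁻ θ in Ioo (0:ℝ) π, G s θ := by
    rw [setLIntegral_congr_fun polarCoord.open_target.measurableSet
      hptwise]
    rw [polarCoord_target, Measure.volume_eq_prod, ← Measure.prod_restrict,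
      lintegral_prod _ hmeasGp.aemeasurable]
    apply lintegral_congr
    intro s
    simp only
    rw [lintegral_indicator measurableSet_Ioo, Measure.restrict_restrict measurableSet_Ioo]
    have hss : Ioo (0:ℝ) π ∩ Ioo (-π) π = Ioo (0:ℝ) π := by
      apply inter_eq_left.mpr
      intro θ hθ
      exact ⟨by linarith [hθ.1, Real.pi_pos], hθ.2⟩
    rw [hss]
  -- evaluate the angular integral
  have hFTC : ∀ s : ℝ, 0 < s → s ≠ r → ∫⁻ θ in Ioo (0:ℝ) π, G s θ
      = ENNReal.ofReal ((2 / r) * (s * f s * min r s)) := by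
    intro s hs hsr
    have hD : ∀ θ : ℝ, 0 < r ^ 2 + s ^ 2 - 2 * r * s * Real.cos θ := by
      intro θ
      have h1 : 0 < (r - s) ^ 2 := by
        have h2 : r - s ≠ 0 := sub_ne_zero.2 (Ne.symm hsr)
        positivity
      nlinarith [Real.cos_le_one θ, mul_pos hr hs]
    set g : ℝ → ℝ := fun θ => s ^ 2 * Real.sin θ * f s /
      Real.sqrt (r ^ 2 + s ^ 2 - 2 * r * s * Real.cos θ) with hgdef
    have hgc : Continuous g := by
      apply Continuous.div
      · exact (continuous_const.mul Real.continuous_sin).mul continuous_const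
      · exact (continuous_const.sub (continuous_const.mul Real.continuous_cos)).sqrt
      · exact fun θ => (Real.sqrt_pos.2 (hD θ)).ne'
    have hgnn : ∀ θ ∈ Ioo (0:ℝ) π, 0 ≤ g θ := by
      intro θ hθ
      have hsin := Real.sin_nonneg_of_nonneg_of_le_pi hθ.1.le hθ.2.le
      have hfs := hnn s
      have hsq := (hD θ).le
      rw [hgdef]
      positivity
    have hInt : IntegrableOn g (Ioo 0 π) :=
      (hgc.integrableOn_Icc).mono_set Ioo_subset_Icc_self
    have heval : ∫ θ in Ioo (0:ℝ) π, g θ = (2 / r) * (s * f s * min r s) := by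
      rw [← integral_Ioc_eq_integral_Ioo, ← intervalIntegral.integral_of_le Real.pi_pos.le]
      set φ : ℝ → ℝ := fun θ =>
        (s ^ 2 * f s) / (r * s) * Real.sqrt (r ^ 2 + s ^ 2 - 2 * r * s * Real.cos θ) with hφdef
      have hder : ∀ θ ∈ uIcc (0:ℝ) π, HasDerivAt φ (g θ) θ := by
        intro θ _
        have hu : HasDerivAt (fun θ : ℝ => r ^ 2 + s ^ 2 - 2 * r * s * Real.cos θ)
            (2 * r * s * Real.sin θ) θ := by
          have h := (Real.hasDerivAt_cos θ).const_mul (2 * r * s)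
          have h2 := h.const_sub (r ^ 2 + s ^ 2)
          refine h2.congr_deriv ?_
          ring
        have hsq := (Real.hasDerivAt_sqrt (hD θ).ne').comp θ hu
        have h3 := hsq.const_mul ((s ^ 2 * f s) / (r * s))
        refine h3.congr_deriv ?_
        rw [hgdef]
        simp only [Function.comp]
        have h4 : Real.sqrt (r ^ 2 + s ^ 2 - 2 * r * s * Real.cos θ) ≠ 0 :=
          (Real.sqrt_pos.2 (hD θ)).ne'
        field_simp
      rw [intervalIntegral.integral_eq_sub_of_hasDerivAt hder (hgc.intervalIntegrable 0 π)]
      rw [hφdef]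
      simp only [Real.cos_pi, Real.cos_zero]
      have e1 : r ^ 2 + s ^ 2 - 2 * r * s * (-1) = (r + s) ^ 2 := by ring
      have e2 : r ^ 2 + s ^ 2 - 2 * r * s * 1 = (r - s) ^ 2 := by ring
      rw [e1, e2, Real.sqrt_sq_eq_abs, Real.sqrt_sq_eq_abs,
        abs_of_pos (by positivity : (0:ℝ) < r + s)]
      rcases le_total r s with h | h
      · rw [abs_of_nonpos (by linarith), min_eq_left h]
        field_simp
        ring
      · rw [abs_of_nonneg (by linarith), min_eq_right h]
        field_simp
        ring
    have hgae : 0 ≤ᵐ[volume.restrict (Ioo (0:ℝ) π)] g :=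
      (ae_restrict_iff' measurableSet_Ioo).2 (ae_of_all _ hgnn)
    calc ∫⁻ θ in Ioo (0:ℝ) π, G s θ
        = ∫⁻ θ in Ioo (0:ℝ) π, ENNReal.ofReal (g θ) := by rw [hGdef]
      _ = ENNReal.ofReal (∫ θ in Ioo (0:ℝ) π, g θ) :=
          (ofReal_integral_eq_lintegral_ofReal hInt hgae).symm
      _ = ENNReal.ofReal ((2 / r) * (s * f s * min r s)) := by rw [heval]
  have hae_ne : ∀ᵐ s ∂(volume.restrict (Ioi (0:ℝ))), s ≠ r := by
    apply ae_restrict_of_ae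
    rw [ae_iff]
    have h1 : {s : ℝ | ¬s ≠ r} = {r} := by
      ext s; simp [eq_comm]
    rw [h1]
    exact measure_singleton r
  have step8 : ∫⁻ s in Ioi (0:ℝ), ∫⁻ θ in Ioo (0:ℝ) π, G s θ
      = ∫⁻ s in Ioi (0:ℝ), ENNReal.ofReal ((2 / r) * (s * f s * min r s)) := by
    apply lintegral_congr_ae
    filter_upwards [hae_ne, ae_restrict_mem measurableSet_Ioi] with s h1 h2
    exact hFTC s h2 h1
  have hk : Continuous (fun s : ℝ => (2 / r) * (s * f s * min r s)) := by
    apply continuous_const.mul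
    exact (continuous_id.mul hf).mul (continuous_const.min continuous_id)
  have hkcs : HasCompactSupport (fun s : ℝ => (2 / r) * (s * f s * min r s)) := by
    apply HasCompactSupport.intro hcs
    intro s hs2
    rw [image_eq_zero_of_notMem_tsupport hs2]
    ring
  have hkint : IntegrableOn (fun s : ℝ => (2 / r) * (s * f s * min r s)) (Ioi 0) :=
    (hk.integrable_of_hasCompactSupport hkcs).integrableOn
  have hknn : 0 ≤ᵐ[volume.restrict (Ioi (0:ℝ))]
      fun s => (2 / r) * (s * f s * min r s) := by
    refine (ae_restrict_iff' measurableSet_Ioi).2 (ae_of_all _ ?_)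
    intro s hs
    have h1 := hnn s
    have h2 : (0:ℝ) ≤ min r s := le_min hr.le (le_of_lt hs)
    have h3 : (0:ℝ) < s := hs
    positivity
  have step9 : ∫⁻ s in Ioi (0:ℝ), ENNReal.ofReal ((2 / r) * (s * f s * min r s))
      = ENNReal.ofReal ((2 / r) * ∫ s in Ioi (0:ℝ), s * f s * min r s) := by
    rw [← ofReal_integral_eq_lintegral_ofReal hkint hknn, integral_const_mul]
  have hNnn : 0 ≤ ∫ s in Ioi (0:ℝ), s * f s * min r s := by
    apply setIntegral_nonneg measurableSet_Ioi
    intro s hs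
    exact mul_nonneg (mul_nonneg (le_of_lt hs) (hnn s)) (le_min hr.le (le_of_lt hs))
  rw [step0, step1, step2, lintegral_congr step3,
    lintegral_const_mul' _ _ ENNReal.ofReal_ne_top, step4, step5, step6, step8, step9]
  rw [← ENNReal.ofReal_mul (by positivity : (0:ℝ) ≤ 2 * π)]
  rw [ENNReal.toReal_ofReal (by
    have h2r : (0:ℝ) ≤ 2 / r := by positivity
    have := mul_nonneg h2r hNnn
    positivity)]
  ring


theorem LY_deriv_P (K γ lam : ℝ) (hK : 0 < K) (hγ : 1 < γ)
    (f V V' : ℝ → ℝ) (hf : Continuous f) (hnn : ∀ t, 0 ≤ f t)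
    (hV : ∀ s, 0 < s → HasDerivAt V (V' s) s)
    (hV'c : ContinuousOn V' (Ioi 0))
    (hEL : ∀ s, 0 < s → (K * γ / (γ - 1)) * f s ^ (γ - 1) = max (V s + lam) 0)
    (t : ℝ) (ht : 0 < t) :
    HasDerivAt (fun s => K * f s ^ γ) (f t * V' t) t := by
  have hγ1 : γ - 1 ≠ 0 := by linarith
  set c : ℝ := K * γ / (γ - 1) with hc
  have hcpos : 0 < c := by
    apply div_pos (by nlinarith) (by linarith)
  set q : ℝ := γ / (γ - 1) with hq
  have hqpos : 0 < q := div_pos (by linarith) (by linarith)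
  have hq1 : 1 < q := by
    rw [hq, lt_div_iff₀ (by linarith : (0:ℝ) < γ - 1)]
    linarith
  by_cases hpos : 0 < f t
  · -- positive case
    have hnbhd : ∀ᶠ s in 𝓝 t, 0 < s ∧ 0 < f s :=
      (lt_mem_nhds ht).and ((hf.tendsto t).eventually (lt_mem_nhds hpos))
    have hfeq : ∀ s, 0 < s → 0 < f s → (V s + lam) / c = f s ^ (γ - 1) := by
      intro s hs hfs
      have h1 := hEL s hs
      have h2 : 0 < c * f s ^ (γ - 1) := mul_pos hcpos (Real.rpow_pos_of_pos hfs _)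
      have h3 : max (V s + lam) 0 = V s + lam := by
        rcases max_choice (V s + lam) 0 with h | h
        · exact h
        · rw [h] at h1; exfalso; rw [h1] at h2; exact lt_irrefl 0 h2
      rw [h3] at h1
      field_simp [← h1]
      linarith [h1]
    have hcongr : (fun s => K * f s ^ γ) =ᶠ[𝓝 t] fun s => K * ((V s + lam) / c) ^ q := by
      filter_upwards [hnbhd] with s hs
      rw [hfeq s hs.1 hs.2, ← Real.rpow_mul (hnn s)]
      congr 2
      field_simp [hq]
      rw [hq]; field_simp
    have hg : HasDerivAt (fun s => (V s + lam) / c) (V' t / c) t :=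
      ((hV t ht).add_const lam).div_const c
    have hgt : (V t + lam) / c = f t ^ (γ - 1) := hfeq t ht hpos
    have hgne : (V t + lam) / c ≠ 0 := by
      rw [hgt]; exact (Real.rpow_pos_of_pos hpos _).ne'
    have hd := (hg.rpow_const (p := q) (Or.inl hgne)).const_mul K
    have hval : K * (V' t / c * q * ((V t + lam) / c) ^ (q - 1)) = f t * V' t := by
      rw [hgt, ← Real.rpow_mul (hnn t)]
      have he : (γ - 1) * (q - 1) = 1 := by
        field_simp [hq]
        rw [hq]; field_simp; ring
      rw [he, Real.rpow_one]
      field_simp [hc, hq]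
      ring
    rw [← hval]
    exact hd.congr_of_eventuallyEq hcongr
  · -- zero case
    have hft : f t = 0 := le_antisymm (not_lt.1 hpos) (hnn t)
    rw [hft, zero_mul]
    -- V t + lam ≤ 0
    have hVt : V t + lam ≤ 0 := by
      have h1 := hEL t ht
      rw [hft, Real.zero_rpow hγ1, mul_zero] at h1
      exact max_eq_right_iff.1 h1.symm
    -- Lipschitz bound for V on I
    set I : Set ℝ := Icc (t / 2) (3 * t / 2) with hI
    have hIsub : I ⊆ Ioi 0 := fun s hs => by
      simp only [hI, mem_Icc] at hs; exact lt_of_lt_of_le (by linarith) hs.1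
    obtain ⟨L, hL⟩ := (isCompact_Icc (a := t/2) (b := 3*t/2)).exists_bound_of_continuousOn
      (hV'c.mono hIsub)
    have hL0 : 0 ≤ L := le_trans (norm_nonneg _) (hL t (by constructor <;> linarith))
    have hLip : ∀ s ∈ I, |V s - V t| ≤ L * |s - t| := by
      intro s hs
      have := Convex.norm_image_sub_le_of_norm_hasDerivWithin_le
        (f := V) (f' := V') (s := I) (C := L)
        (fun y hy => (hV y (hIsub hy)).hasDerivWithinAt) hL (convex_Icc _ _)
        (by constructor <;> [linarith; linarith] : t ∈ I) hs
      simpa [Real.norm_eq_abs] using this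
    set C : ℝ := K * (L / c) ^ q with hC
    have hC0 : 0 ≤ C := mul_nonneg hK.le (Real.rpow_nonneg (by positivity) _)
    have hPb : ∀ s ∈ I, K * f s ^ γ ≤ C * |s - t| ^ q := by
      intro s hs
      rcases eq_or_lt_of_le (hnn s) with h0 | hfs
      · rw [← h0, Real.zero_rpow (by linarith : γ ≠ 0), mul_zero]
        positivity
      · have hs0 := hIsub hs
        have h1 := hEL s hs0
        have h2 : c * f s ^ (γ - 1) = V s + lam := by
          have h3 : 0 < c * f s ^ (γ - 1) := mul_pos hcpos (Real.rpow_pos_of_pos hfs _)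
          rcases max_choice (V s + lam) 0 with h | h
          · rw [h] at h1; exact h1
          · rw [h] at h1; exfalso; rw [h1] at h3; exact lt_irrefl 0 h3
        have h4 : V s + lam ≤ L * |s - t| := by
          have := hLip s hs
          have h5 : V s - V t ≤ L * |s - t| := (abs_le.1 this).2
          linarith
        have h6 : f s ^ (γ - 1) ≤ L * |s - t| / c := by
          rw [← h2] at h4
          rw [le_div_iff₀ hcpos]
          linarith
        have h7 : f s ^ γ ≤ (L * |s - t| / c) ^ q := by
          have h8 : f s ^ γ = (f s ^ (γ - 1)) ^ q := by
            rw [← Real.rpow_mul (hnn s)]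
            congr 1
            field_simp [hq]
            rw [hq]; field_simp
          rw [h8]
          exact Real.rpow_le_rpow (Real.rpow_nonneg (hnn s) _) h6 hqpos.le
        calc K * f s ^ γ ≤ K * (L * |s - t| / c) ^ q := by
              exact mul_le_mul_of_nonneg_left h7 hK.le
          _ = C * |s - t| ^ q := by
              rw [hC, show L * |s - t| / c = (L / c) * |s - t| by ring,
                Real.mul_rpow (by positivity) (abs_nonneg _)]
              ring
    -- conclude via slope squeeze
    rw [hasDerivAt_iff_tendsto_slope]
    apply squeeze_zero_norm' (a := fun s => C * |s - t| ^ (q - 1))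
    · have hIme : ∀ᶠ s in 𝓝[≠] t, s ∈ I := by
        apply eventually_nhdsWithin_of_eventually_nhds
        have : Ioo (t/2) (3*t/2) ∈ 𝓝 t := Ioo_mem_nhds (by linarith) (by linarith)
        filter_upwards [this] with s hs
        exact ⟨hs.1.le, hs.2.le⟩
      filter_upwards [hIme, self_mem_nhdsWithin] with s hsI hsne
      have hsne' : s - t ≠ 0 := sub_ne_zero.2 hsne
      have habs : (0:ℝ) < |s - t| := abs_pos.2 hsne'
      rw [slope_def_field, hft, Real.zero_rpow (by linarith : γ ≠ 0), mul_zero, sub_zero,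
        Real.norm_eq_abs, abs_div]
      rw [div_le_iff₀ habs]
      have h9 : |K * f s ^ γ| = K * f s ^ γ := abs_of_nonneg (by
        have := Real.rpow_nonneg (hnn s) γ
        positivity)
      rw [h9]
      calc K * f s ^ γ ≤ C * |s - t| ^ q := hPb s hsI
        _ = C * |s - t| ^ (q - 1) * |s - t| := by
            rw [Real.rpow_sub_one habs.ne']
            field_simp
    · have h1 : Tendsto (fun s : ℝ => |s - t|) (𝓝[≠] t) (𝓝 0) := by
        have h2 : Tendsto (fun s : ℝ => |s - t|) (𝓝 t) (𝓝 0) := by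
          have h6 : Continuous (fun s : ℝ => |s - t|) :=
            continuous_abs.comp (continuous_id.sub continuous_const)
          have := h6.tendsto t
          simpa using this
        exact h2.mono_left nhdsWithin_le_nhds
      have h3 : Tendsto (fun u : ℝ => u ^ (q - 1)) (𝓝 0) (𝓝 0) := by
        have h4 := (Real.continuousAt_rpow_const 0 (q - 1) (Or.inr (by linarith))).tendsto
        rwa [Real.zero_rpow (by linarith : q - 1 ≠ 0)] at h4
      have h5 := (h3.comp h1).const_mul C
      simpa using h5


theorem LY_Ioi_interval (g : ℝ → ℝ) (hgi : Integrable g)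
    (T : ℝ) (hT : 0 ≤ T) (h0 : ∀ s, T ≤ s → g s = 0) :
    ∫ s in Ioi (0:ℝ), g s = ∫ s in (0:ℝ)..T, g s := by
  have h1 : ∫ s in Ioi (0:ℝ), g s = (∫ s in Ioc 0 T, g s) + ∫ s in Ioi T, g s := by
    rw [← setIntegral_union (Ioc_disjoint_Ioi le_rfl) measurableSet_Ioi
      hgi.integrableOn hgi.integrableOn, Ioc_union_Ioi_eq_Ioi hT]
  have h2 : ∫ s in Ioi T, g s = 0 := by
    apply integral_eq_zero_of_ae
    filter_upwards [ae_restrict_mem measurableSet_Ioi] with s hs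
    exact h0 s (le_of_lt hs)
  rw [h1, h2, add_zero, intervalIntegral.integral_of_le hT]

theorem LY_main
    (K γ lam : ℝ) (hK : 0 < K) (hγ : 4/3 < γ) (hlam : lam < 0)
    (σ : EuclideanSpace ℝ (Fin 3) → ℝ) (σrad : ℝ → ℝ)
    (hrad : ∀ x, σ x = σrad ‖x‖)
    (hcont : Continuous σ)
    (hnn : ∀ x, 0 ≤ σ x)
    (hcs : HasCompactSupport σ)
    (hEL : ∀ x, (K * γ / (γ - 1)) * σ x ^ (γ - 1) =
      max ((∫ y, σ y / ‖x - y‖) + lam) 0) :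
    (∫ x, σ x * ∫ y, σ y / ‖x - y‖) =
      (6 * γ - 6) * ∫ x, (K / (γ - 1)) * σ x ^ γ := by
  have hγ1 : (1:ℝ) < γ := by linarith
  have hγ1' : γ - 1 ≠ 0 := by intro h; nlinarith
  have hγ0 : γ ≠ 0 := by intro h; nlinarith
  -- radial profile
  set u₀ : EuclideanSpace ℝ (Fin 3) := EuclideanSpace.single 0 1 with hu₀def
  have hu₀ : ‖u₀‖ = 1 := by rw [hu₀def, EuclideanSpace.norm_single]; norm_num
  set f : ℝ → ℝ := fun s => σ (s • u₀) with hfdef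
  have hσf : ∀ y, σ y = f ‖y‖ := by
    intro y
    rw [hfdef]
    simp only
    rw [hrad y, hrad (‖y‖ • u₀)]
    congr 1
    rw [norm_smul, hu₀, mul_one, Real.norm_eq_abs, abs_norm]
  have hfc : Continuous f := hcont.comp (continuous_id.smul continuous_const)
  have hfnn : ∀ s, 0 ≤ f s := fun s => hnn _
  have hnormsu : ∀ s : ℝ, 0 ≤ s → ‖s • u₀‖ = s := by
    intro s hs
    rw [norm_smul, hu₀, mul_one, Real.norm_eq_abs, abs_of_nonneg hs]
  -- support bound
  obtain ⟨R0, hR0⟩ :=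
    (hcs : IsCompact (tsupport σ)).isBounded.subset_closedBall (0 : EuclideanSpace ℝ (Fin 3))
  set T : ℝ := |R0| + 1 with hTdef
  have hT0 : 0 < T := by positivity
  have hf0 : ∀ s : ℝ, T ≤ |s| → f s = 0 := by
    intro s hs
    rw [hfdef]
    simp only
    apply image_eq_zero_of_notMem_tsupport
    intro hmem
    have h1 := hR0 hmem
    rw [mem_closedBall, dist_zero_right, norm_smul, hu₀, mul_one, Real.norm_eq_abs] at h1
    have : |R0| + 1 ≤ |s| := hs
    have : R0 ≤ |R0| := le_abs_self R0
    linarith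
  have hfT : ∀ s : ℝ, T ≤ s → f s = 0 := fun s hs =>
    hf0 s (le_trans hs (le_abs_self s))
  have hfcs : HasCompactSupport f := by
    apply HasCompactSupport.intro (isCompact_Icc (a := -T) (b := T))
    intro s hs
    apply hf0
    rw [mem_Icc] at hs
    push_neg at hs
    rcases le_or_gt (-T) s with h | h
    · have := hs h; rw [abs_of_pos (by linarith)]; linarith
    · rw [abs_of_neg (by linarith)]; linarith
  -- 1D functions
  set m : ℝ → ℝ := fun t => ∫ s in (0:ℝ)..t, s ^ 2 * f s with hmdef
  set w : ℝ → ℝ := fun t => (∫ s in Ioi (0:ℝ), s * f s) - ∫ s in (0:ℝ)..t, s * f s with hwdef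
  have hsf : Continuous (fun s : ℝ => s * f s) := continuous_id.mul hfc
  have hs2f : Continuous (fun s : ℝ => s ^ 2 * f s) := (continuous_pow 2).mul hfc
  have hCSof : ∀ g : ℝ → ℝ, (∀ s, f s = 0 → g s = 0) → HasCompactSupport g := by
    intro g hg
    apply HasCompactSupport.intro (hfcs : IsCompact (tsupport f))
    intro s hs
    exact hg s (image_eq_zero_of_notMem_tsupport hs)
  have hsfint : Integrable (fun s : ℝ => s * f s) :=
    hsf.integrable_of_hasCompactSupport (hCSof _ fun s h => by simp [h])
  have hs2fint : Integrable (fun s : ℝ => s ^ 2 * f s) :=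
    hs2f.integrable_of_hasCompactSupport (hCSof _ fun s h => by simp [h])
  have hm' : ∀ t : ℝ, HasDerivAt m (t ^ 2 * f t) t := by
    intro t
    exact intervalIntegral.integral_hasDerivAt_right (hs2f.intervalIntegrable _ _)
      (hs2f.stronglyMeasurableAtFilter _ _) hs2f.continuousAt
  have hw' : ∀ t : ℝ, HasDerivAt w (-(t * f t)) t := by
    intro t
    exact HasDerivAt.const_sub _ (intervalIntegral.integral_hasDerivAt_right
      (hsf.intervalIntegrable _ _) (hsf.stronglyMeasurableAtFilter _ _) hsf.continuousAt)
  have hmc : Continuous m := continuous_iff_continuousAt.2 fun t => (hm' t).continuousAt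
  have hwc : Continuous w := continuous_iff_continuousAt.2 fun t => (hw' t).continuousAt
  have hm0 : m 0 = 0 := intervalIntegral.integral_same
  have hwIoi : ∀ t : ℝ, 0 ≤ t → w t = ∫ s in Ioi t, s * f s := by
    intro t ht
    have hsplit : ∫ s in Ioi (0:ℝ), s * f s
        = (∫ s in Ioc 0 t, s * f s) + ∫ s in Ioi t, s * f s := by
      rw [← setIntegral_union (Ioc_disjoint_Ioi le_rfl) measurableSet_Ioi
        hsfint.integrableOn hsfint.integrableOn, Ioc_union_Ioi_eq_Ioi ht]
    rw [hwdef]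
    simp only
    rw [intervalIntegral.integral_of_le ht, hsplit]
    ring
  have hwT : ∀ t : ℝ, T ≤ t → w t = 0 := by
    intro t ht
    rw [hwIoi t (by linarith)]
    apply integral_eq_zero_of_ae
    filter_upwards [ae_restrict_mem measurableSet_Ioi] with s hs
    have hfs : f s = 0 := hfT s (by linarith [le_of_lt (mem_Ioi.1 hs)])
    simp [hfs]
  -- min decomposition
  have hN : ∀ t : ℝ, 0 < t →
      (∫ s in Ioi (0:ℝ), s * f s * min t s) = m t + t * w t := by
    intro t ht
    have hminc : Continuous (fun s : ℝ => s * f s * min t s) :=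
      hsf.mul (continuous_const.min continuous_id)
    have hminint : Integrable (fun s : ℝ => s * f s * min t s) :=
      hminc.integrable_of_hasCompactSupport
        (hCSof _ fun s h => by simp [h])
    have h1 : ∫ s in Ioi (0:ℝ), s * f s * min t s
        = (∫ s in Ioc 0 t, s * f s * min t s) + ∫ s in Ioi t, s * f s * min t s := by
      rw [← setIntegral_union (Ioc_disjoint_Ioi le_rfl) measurableSet_Ioi
        hminint.integrableOn hminint.integrableOn, Ioc_union_Ioi_eq_Ioi ht.le]
    have h2 : ∫ s in Ioc 0 t, s * f s * min t s = m t := by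
      rw [hmdef]
      simp only
      rw [intervalIntegral.integral_of_le ht.le]
      apply setIntegral_congr_fun measurableSet_Ioc
      intro s hs
      simp only
      rw [min_eq_right hs.2]
      ring
    have h3 : ∫ s in Ioi t, s * f s * min t s = t * w t := by
      rw [hwIoi t ht.le, ← integral_const_mul]
      apply setIntegral_congr_fun measurableSet_Ioi
      intro s hs
      simp only
      rw [min_eq_left (le_of_lt hs)]
      ring
    rw [h1, h2, h3]
  -- potential function
  set Vf : ℝ → ℝ := fun t => 4 * π * (m t / t + w t) with hVfdef
  have hVx : ∀ t : ℝ, 0 < t → (∫ y, σ y / ‖(t • u₀) - y‖) = Vf t := by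
    intro t ht
    have hxnorm : ‖t • u₀‖ = t := hnormsu t ht.le
    have hxne : (t • u₀) ≠ 0 := by
      intro h
      rw [h, norm_zero] at hxnorm
      exact ht.ne hxnorm
    rw [newton3 f hfc hfnn hfcs σ hσf _ hxne, hxnorm, hN t ht, hVfdef]
    simp only
    field_simp
  have hEL1 : ∀ t : ℝ, 0 < t →
      (K * γ / (γ - 1)) * f t ^ (γ - 1) = max (Vf t + lam) 0 := by
    intro t ht
    have h := hEL (t • u₀)
    rw [hVx t ht] at h
    exact h
  set V' : ℝ → ℝ := fun t => -(4 * π) * m t / t ^ 2 with hV'def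
  have hV' : ∀ t : ℝ, 0 < t → HasDerivAt Vf (V' t) t := by
    intro t ht
    have h1 : HasDerivAt (fun u => m u / u) ((t ^ 2 * f t * t - m t * 1) / t ^ 2) t :=
      (hm' t).div (hasDerivAt_id t) ht.ne'
    have h2 := (h1.add (hw' t)).const_mul (4 * π)
    refine h2.congr_deriv ?_
    rw [hV'def]
    simp only
    field_simp
    ring
  have hV'c : ContinuousOn V' (Ioi 0) := by
    rw [hV'def]
    apply ContinuousOn.div ((continuous_const.mul hmc).continuousOn)
      ((continuous_pow 2).continuousOn)
    intro t ht
    exact pow_ne_zero 2 (ne_of_gt ht)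
  have hP' : ∀ t : ℝ, 0 < t → HasDerivAt (fun s => K * f s ^ γ) (f t * V' t) t :=
    fun t ht => LY_deriv_P K γ lam hK hγ1 f Vf V' hfc hfnn hV' hV'c hEL1 t ht
  have hPc : Continuous (fun s : ℝ => K * f s ^ γ) :=
    continuous_const.mul (hfc.rpow_const (fun s => Or.inr (by linarith)))
  -- Pohozaev identity via FTC
  set D : ℝ → ℝ := fun s => 3 * (s ^ 2 * (K * f s ^ γ)) - 4 * π * (s * (m s * f s))
    with hDdef
  have hDc : Continuous D := by
    rw [hDdef]
    exact (continuous_const.mul ((continuous_pow 2).mul hPc)).sub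
      (continuous_const.mul (continuous_id.mul (hmc.mul hfc)))
  have hQder : ∀ t ∈ uIcc (0:ℝ) T, HasDerivAt (fun s => s ^ 3 * (K * f s ^ γ)) (D t) t := by
    intro t htmem
    rw [uIcc_of_le hT0.le] at htmem
    rcases eq_or_lt_of_le htmem.1 with h0 | hpos
    · -- t = 0
      rw [← h0]
      have hval : D 0 = 0 := by rw [hDdef]; norm_num
      rw [hval, hasDerivAt_iff_tendsto_slope]
      have hcongr : (fun s : ℝ => s ^ 2 * (K * f s ^ γ))
          =ᶠ[𝓝[≠] (0:ℝ)] slope (fun s => s ^ 3 * (K * f s ^ γ)) 0 := by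
        filter_upwards [self_mem_nhdsWithin] with s hs
        have hs0 : s ≠ 0 := hs
        rw [slope_def_field]
        field_simp
        ring
      rw [← tendsto_congr' hcongr]
      have hc2 : Continuous (fun s : ℝ => s ^ 2 * (K * f s ^ γ)) := (continuous_pow 2).mul hPc
      have h3 := (hc2.tendsto 0).mono_left (nhdsWithin_le_nhds (s := {(0:ℝ)}ᶜ))
      simpa using h3
    · have h1 := (hasDerivAt_pow 3 t).mul (hP' t hpos)
      refine h1.congr_deriv ?_
      rw [hDdef, hV'def]
      simp only
      push_cast
      field_simp
      ring
  have hPoho0 : ∫ s in (0:ℝ)..T, D s = 0 := by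
    rw [intervalIntegral.integral_eq_sub_of_hasDerivAt hQder (hDc.intervalIntegrable _ _)]
    have hfT0 : f T = 0 := hfT T le_rfl
    rw [hfT0, Real.zero_rpow hγ0]
    norm_num
  -- m*w identity via FTC
  set D2 : ℝ → ℝ := fun s => s ^ 2 * f s * w s - s * (m s * f s) with hD2def
  have hD2c : Continuous D2 := by
    rw [hD2def]
    exact (hs2f.mul hwc).sub (continuous_id.mul (hmc.mul hfc))
  have hmwder : ∀ t ∈ uIcc (0:ℝ) T, HasDerivAt (fun s => m s * w s) (D2 t) t := by
    intro t _
    have h1 := (hm' t).mul (hw' t)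
    refine h1.congr_deriv ?_
    rw [hD2def]
    ring
  have hmwFTC : ∫ s in (0:ℝ)..T, D2 s = 0 := by
    rw [intervalIntegral.integral_eq_sub_of_hasDerivAt hmwder (hD2c.intervalIntegrable _ _)]
    rw [hwT T le_rfl, hm0]
    ring
  -- 1D integrals
  set J1 : ℝ := ∫ s in Ioi (0:ℝ), s * (m s * f s) with hJ1def
  set J2 : ℝ := ∫ s in Ioi (0:ℝ), s ^ 2 * f s * w s with hJ2def
  set JP : ℝ := ∫ s in Ioi (0:ℝ), s ^ 2 * (K * f s ^ γ) with hJPdef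
  have hJ1c : Continuous (fun s : ℝ => s * (m s * f s)) :=
    continuous_id.mul (hmc.mul hfc)
  have hJ2c : Continuous (fun s : ℝ => s ^ 2 * f s * w s) := hs2f.mul hwc
  have hJPc : Continuous (fun s : ℝ => s ^ 2 * (K * f s ^ γ)) := (continuous_pow 2).mul hPc
  have hJ1i : Integrable (fun s : ℝ => s * (m s * f s)) :=
    hJ1c.integrable_of_hasCompactSupport (hCSof _ fun s h => by simp [h])
  have hJ2i : Integrable (fun s : ℝ => s ^ 2 * f s * w s) :=
    hJ2c.integrable_of_hasCompactSupport (hCSof _ fun s h => by simp [h])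
  have hJPi : Integrable (fun s : ℝ => s ^ 2 * (K * f s ^ γ)) :=
    hJPc.integrable_of_hasCompactSupport
      (hCSof _ fun s h => by simp [h, Real.zero_rpow hγ0])
  have hJ1T : J1 = ∫ s in (0:ℝ)..T, s * (m s * f s) :=
    LY_Ioi_interval _ hJ1i T hT0.le (fun s hs => by simp [hfT s hs])
  have hJ2T : J2 = ∫ s in (0:ℝ)..T, s ^ 2 * f s * w s :=
    LY_Ioi_interval _ hJ2i T hT0.le (fun s hs => by simp [hfT s hs])
  have hJPT : JP = ∫ s in (0:ℝ)..T, s ^ 2 * (K * f s ^ γ) :=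
    LY_Ioi_interval _ hJPi T hT0.le (fun s hs => by simp [hfT s hs, Real.zero_rpow hγ0])
  have h3JP : 3 * JP = 4 * π * J1 := by
    have h6 : ∫ s in (0:ℝ)..T, (3 * (s ^ 2 * (K * f s ^ γ)) - 4 * π * (s * (m s * f s)))
        = (∫ s in (0:ℝ)..T, 3 * (s ^ 2 * (K * f s ^ γ)))
          - ∫ s in (0:ℝ)..T, 4 * π * (s * (m s * f s)) :=
      intervalIntegral.integral_sub
        ((continuous_const.mul hJPc).intervalIntegrable _ _)
        ((continuous_const.mul hJ1c).intervalIntegrable _ _)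
    have h7 : ∫ s in (0:ℝ)..T, (3 * (s ^ 2 * (K * f s ^ γ)) - 4 * π * (s * (m s * f s))) = 0 :=
      hPoho0
    rw [h6] at h7
    rw [intervalIntegral.integral_const_mul, intervalIntegral.integral_const_mul] at h7
    rw [hJ1T, hJPT]
    linarith
  have hJ2J1 : J2 = J1 := by
    have h6 : ∫ s in (0:ℝ)..T, (s ^ 2 * f s * w s - s * (m s * f s))
        = (∫ s in (0:ℝ)..T, s ^ 2 * f s * w s) - ∫ s in (0:ℝ)..T, s * (m s * f s) :=
      intervalIntegral.integral_sub (hJ2c.intervalIntegrable _ _) (hJ1c.intervalIntegrable _ _)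
    have h7 : ∫ s in (0:ℝ)..T, (s ^ 2 * f s * w s - s * (m s * f s)) = 0 := hmwFTC
    rw [h6] at h7
    rw [hJ1T, hJ2T]
    linarith
  -- radial reduction of the energy integrals
  have hAeq : (∫ x, (K / (γ - 1)) * σ x ^ γ)
      = 4 * π * ∫ s in Ioi (0:ℝ), s ^ 2 * ((K / (γ - 1)) * f s ^ γ) := by
    have h1 : (fun x : EuclideanSpace ℝ (Fin 3) => (K / (γ - 1)) * σ x ^ γ)
        = fun x => (K / (γ - 1)) * f ‖x‖ ^ γ := funext fun x => by rw [hσf x]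
    rw [h1]
    exact radial3 (fun s => (K / (γ - 1)) * f s ^ γ)
  have hJPA : ∫ s in Ioi (0:ℝ), s ^ 2 * ((K / (γ - 1)) * f s ^ γ) = (1 / (γ - 1)) * JP := by
    rw [hJPdef, ← integral_const_mul]
    apply integral_congr_ae
    filter_upwards with s
    field_simp
  have h0ae : ∀ᵐ x : EuclideanSpace ℝ (Fin 3), x ≠ 0 := by
    rw [ae_iff]
    have h1 : {x : EuclideanSpace ℝ (Fin 3) | ¬x ≠ 0} = {0} := by
      ext x; simp [not_not]
    rw [h1]
    exact measure_singleton 0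
  have hGx : ∀ x : EuclideanSpace ℝ (Fin 3), x ≠ 0 →
      σ x * (∫ y, σ y / ‖x - y‖) = f ‖x‖ * Vf ‖x‖ := by
    intro x hx
    have hxpos : 0 < ‖x‖ := norm_pos_iff.2 hx
    have h1 : ∫ y, σ y / ‖x - y‖ = Vf ‖x‖ := by
      rw [newton3 f hfc hfnn hfcs σ hσf x hx, hN ‖x‖ hxpos, hVfdef]
      simp only
      field_simp
    rw [h1, hσf x]
  have hGeq0 : (∫ x, σ x * ∫ y, σ y / ‖x - y‖)
      = 4 * π * ∫ s in Ioi (0:ℝ), s ^ 2 * (f s * Vf s) := by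
    have h2 : (fun x : EuclideanSpace ℝ (Fin 3) => σ x * ∫ y, σ y / ‖x - y‖)
        =ᵐ[volume] fun x => f ‖x‖ * Vf ‖x‖ := by
      filter_upwards [h0ae] with x hx
      exact hGx x hx
    rw [integral_congr_ae h2]
    exact radial3 (fun s => f s * Vf s)
  have hGinner : ∫ s in Ioi (0:ℝ), s ^ 2 * (f s * Vf s) = 4 * π * J1 + 4 * π * J2 := by
    have h1 : ∫ s in Ioi (0:ℝ), s ^ 2 * (f s * Vf s)
        = ∫ s in Ioi (0:ℝ), (4 * π * (s * (m s * f s)) + 4 * π * (s ^ 2 * f s * w s)) := by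
      apply setIntegral_congr_fun measurableSet_Ioi
      intro s hs
      simp only [hVfdef]
      have hs0 : s ≠ 0 := ne_of_gt hs
      field_simp
    rw [h1, integral_add ((show Continuous fun s => 4 * π * (s * (m s * f s)) from continuous_const.mul hJ1c).integrable_of_hasCompactSupport
        ((hCSof _ fun s h => by simp [h]) : HasCompactSupport fun s => 4 * π * (s * (m s * f s)))).integrableOn
      ((show Continuous fun s => 4 * π * (s ^ 2 * f s * w s) from continuous_const.mul hJ2c).integrable_of_hasCompactSupport
        ((hCSof _ fun s h => by simp [h]) : HasCompactSupport fun s => 4 * π * (s ^ 2 * f s * w s))).integrableOn,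
      integral_const_mul, integral_const_mul]
  -- final algebra
  rw [hGeq0, hGinner, hJ2J1, hAeq, hJPA]
  have hJPval : JP = 4 * π * J1 / 3 := by linarith
  rw [hJPval]
  field_simp
  ring

theorem stmt11
    (K γ lam : ℝ) (hK : 0 < K) (hγ : 4/3 < γ) (hlam : lam < 0)
    (σ : EuclideanSpace ℝ (Fin 3) → ℝ) (σrad : ℝ → ℝ)
    (hrad : ∀ x, σ x = σrad ‖x‖)
    (hcont : Continuous σ)
    (hnn : ∀ x, 0 ≤ σ x)
    (hcs : HasCompactSupport σ)
    (hEL : ∀ x, (K * γ / (γ - 1)) * σ x ^ (γ - 1) =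
      max ((∫ y, σ y / ‖x - y‖) + lam) 0) :
    (∫ x, (K / (γ - 1)) * σ x ^ γ) -
        (1/2) * (∫ x, σ x * ∫ y, σ y / ‖x - y‖) =
      (4 - 3 * γ) * ∫ x, (K / (γ - 1)) * σ x ^ γ ∧
    (∫ x, σ x * ∫ y, σ y / ‖x - y‖) =
      (6 * γ - 6) * ∫ x, (K / (γ - 1)) * σ x ^ γ := by
  have h2 := LY_main K γ lam hK hγ hlam σ σrad hrad hcont hnn hcs hEL
  refine ⟨?_, h2⟩
  rw [h2]
  ring
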